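/- Let n ≥ 1, let d ∈ {1,…,n}, and let M ∈ M_{n,d} be a fixed matrix with the property that for some ε > 0 and for every pair of distinct i1, i2 ∈ [n], max( co_M(i1,i2), co_{Mᵀ}(i1,i2) ) ≤ (1+ε)·p²·n, where p = d/n. Then for every pair of subsets A, B ⊆ [n] with |A| ≥ n/(ε·d) and |B| ≥ n/(ε·d), one has | e_M(A,B)/(p·|A|·|B|) − 1 | ≤ sqrt( 2·ε·n / max(|A|, |B|) ). -/

import Mathlib

open scoped Classical

noncomputable section

/-- The set of `n × n` zero-one matrices (encoded as `Bool`-valued functions) in which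
every row sum and every column sum equals `d`. -/
def regSet (n d : ℕ) : Finset (Fin n → Fin n → Bool) :=
  Finset.univ.filter fun M =>
    (∀ i, (Finset.univ.filter fun j => M i j = true).card = d) ∧
    (∀ j, (Finset.univ.filter fun i => M i j = true).card = d)

/-- Codegree: number of common out-neighbors of rows `i1` and `i2`. -/
def codeg {n : ℕ} (M : Fin n → Fin n → Bool) (i1 i2 : Fin n) : ℕ :=
  (Finset.univ.filter fun j => M i1 j = true ∧ M i2 j = true).card

/-- Probability of the event `E` under the uniform distribution on `regSet n d`. -/
def Pr (n d : ℕ) (E : (Fin n → Fin n → Bool) → Prop) : ℝ :=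
  (((regSet n d).filter E).card : ℝ) / ((regSet n d).card : ℝ)

/-- Number of edges from `A` to `B`. -/
def ecount {n : ℕ} (M : Fin n → Fin n → Bool) (A B : Finset (Fin n)) : ℕ :=
  ((A ×ˢ B).filter fun q => M q.1 q.2 = true).card

/-- `μ(A,B) = p·|A|·|B|` where `p = d/n`. -/
def mu (n d : ℕ) (A B : Finset (Fin n)) : ℝ :=
  ((d : ℝ) / n) * A.card * B.card

/-- `μ̂(A,B) = p·min(|A||B|, (n−|A|)(n−|B|))` where `p = d/n`. -/
def muhat (n d : ℕ) (A B : Finset (Fin n)) : ℝ :=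
  ((d : ℝ) / n) * min ((A.card * B.card : ℕ) : ℝ)
    (((n - A.card) * (n - B.card) : ℕ) : ℝ)

/-- The event that all codegrees are within `η·p(1−p)·n` of `p²n`. -/
def Gco (n d : ℕ) (η : ℝ) (M : Fin n → Fin n → Bool) : Prop :=
  ∀ i1 i2 : Fin n, i1 ≠ i2 →
    |(codeg M i1 i2 : ℝ) - ((d : ℝ) / n) ^ 2 * n| ≤
      η * ((d : ℝ) / n) * (1 - (d : ℝ) / n) * n

lemma ecount_transpose {n : ℕ} (M : Fin n → Fin n → Bool) (A B : Finset (Fin n)) :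
    ecount (fun i j => M j i) B A = ecount M A B := by
  unfold ecount
  rw [Finset.card_filter, Finset.card_filter, Finset.sum_product, Finset.sum_product,
    Finset.sum_comm]

lemma key (n d : ℕ) (hd1 : 1 ≤ d) (hd2 : d ≤ n)
    (M : Fin n → Fin n → Bool)
    (hcol : ∀ j, (Finset.univ.filter fun i => M i j = true).card = d)
    (ε : ℝ) (hε : 0 < ε)
    (hco : ∀ j1 j2 : Fin n, j1 ≠ j2 →
      ((Finset.univ.filter fun i => M i j1 = true ∧ M i j2 = true).card : ℝ) ≤
        (1 + ε) * ((d : ℝ) / n) ^ 2 * n)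
    (A B : Finset (Fin n))
    (hA : (n : ℝ) / (ε * d) ≤ (A.card : ℝ)) (hB : (n : ℝ) / (ε * d) ≤ (B.card : ℝ)) :
    |(ecount M A B : ℝ) / (((d : ℝ) / n) * A.card * B.card) - 1| ≤
      Real.sqrt (2 * ε * n / (A.card : ℝ)) := by
  have hn : 1 ≤ n := le_trans hd1 hd2
  have hn0 : (0 : ℝ) < n := by exact_mod_cast hn
  have hd0 : (0 : ℝ) < d := by exact_mod_cast hd1
  set p : ℝ := (d : ℝ) / n with hp_def
  have hp : 0 < p := div_pos hd0 hn0
  have hpn : p * n = d := div_mul_cancel₀ _ (ne_of_gt hn0)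
  have ha0 : 0 < (A.card : ℝ) := lt_of_lt_of_le (div_pos hn0 (mul_pos hε hd0)) hA
  have hb0 : 0 < (B.card : ℝ) := lt_of_lt_of_le (div_pos hn0 (mul_pos hε hd0)) hB
  set a : ℝ := (A.card : ℝ)
  set b : ℝ := (B.card : ℝ)
  set x : Fin n → ℝ := fun i => ∑ j ∈ B, (if M i j = true then (1 : ℝ) else 0) with hx_def
  -- ecount as a sum
  have hsumA : (ecount M A B : ℝ) = ∑ i ∈ A, x i := by
    unfold ecount
    rw [Finset.card_filter]
    push_cast
    rw [Finset.sum_product]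
  -- total sum
  have hsum : ∑ i : Fin n, x i = d * b := by
    rw [hx_def]
    rw [Finset.sum_comm]
    have : ∀ j ∈ B, ∑ i : Fin n, (if M i j = true then (1 : ℝ) else 0) = (d : ℝ) := by
      intro j _
      rw [Finset.sum_boole, hcol j]
    rw [Finset.sum_congr rfl this, Finset.sum_const, nsmul_eq_mul, mul_comm]
  -- sum of squares
  set K : ℝ := (1 + ε) * p ^ 2 * n with hK_def
  have hK0 : 0 ≤ K := by positivity
  have hsumsq : ∑ i : Fin n, (x i) ^ 2 ≤ b * ((d : ℝ) + (b - 1) * K) := by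
    have expand : ∑ i : Fin n, (x i) ^ 2 =
        ∑ j1 ∈ B, ∑ j2 ∈ B,
          ((Finset.univ.filter fun i => M i j1 = true ∧ M i j2 = true).card : ℝ) := by
      have : ∀ i : Fin n, (x i) ^ 2 = ∑ j1 ∈ B, ∑ j2 ∈ B,
          (if M i j1 = true ∧ M i j2 = true then (1 : ℝ) else 0) := by
        intro i
        rw [hx_def, sq, Finset.sum_mul_sum]
        refine Finset.sum_congr rfl fun j1 _ => Finset.sum_congr rfl fun j2 _ => ?_
        by_cases h1 : M i j1 = true <;> by_cases h2 : M i j2 = true <;> simp [h1, h2]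
      rw [Finset.sum_congr rfl fun i _ => this i]
      rw [Finset.sum_comm]
      refine Finset.sum_congr rfl fun j1 _ => ?_
      rw [Finset.sum_comm]
      refine Finset.sum_congr rfl fun j2 _ => ?_
      rw [Finset.sum_boole]
    rw [expand]
    have hrow : ∀ j1 ∈ B, ∑ j2 ∈ B,
        ((Finset.univ.filter fun i => M i j1 = true ∧ M i j2 = true).card : ℝ) ≤
        (d : ℝ) + (b - 1) * K := by
      intro j1 hj1
      rw [← Finset.add_sum_erase _ _ hj1]
      have hdiag : ((Finset.univ.filter fun i => M i j1 = true ∧ M i j1 = true).card : ℝ)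
          = (d : ℝ) := by
        have : (Finset.univ.filter fun i => M i j1 = true ∧ M i j1 = true)
            = (Finset.univ.filter fun i => M i j1 = true) := by
          apply Finset.filter_congr; intro i _; simp
        rw [this, hcol j1]
      rw [hdiag]
      have hoff : ∑ j2 ∈ B.erase j1,
          ((Finset.univ.filter fun i => M i j1 = true ∧ M i j2 = true).card : ℝ)
          ≤ (b - 1) * K := by
        calc ∑ j2 ∈ B.erase j1,
            ((Finset.univ.filter fun i => M i j1 = true ∧ M i j2 = true).card : ℝ)
            ≤ ∑ _j2 ∈ B.erase j1, K := by
              refine Finset.sum_le_sum fun j2 hj2 => ?_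
              exact hco j1 j2 (Ne.symm (Finset.ne_of_mem_erase hj2))
          _ = ((B.erase j1).card : ℝ) * K := by rw [Finset.sum_const, nsmul_eq_mul]
          _ = (b - 1) * K := by
              rw [Finset.card_erase_of_mem hj1]
              congr 1
              have : 1 ≤ B.card := Finset.card_pos.mpr ⟨j1, hj1⟩
              push_cast [Nat.cast_sub this]
              ring
      linarith
    calc ∑ j1 ∈ B, ∑ j2 ∈ B,
        ((Finset.univ.filter fun i => M i j1 = true ∧ M i j2 = true).card : ℝ)
        ≤ ∑ _j1 ∈ B, ((d : ℝ) + (b - 1) * K) := Finset.sum_le_sum hrow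
      _ = b * ((d : ℝ) + (b - 1) * K) := by rw [Finset.sum_const, nsmul_eq_mul]
  -- variance bound
  set c : ℝ := p * b with hc_def
  have hvar_eq : ∑ i : Fin n, (x i - c) ^ 2
      = (∑ i : Fin n, (x i) ^ 2) - 2 * c * (∑ i : Fin n, x i) + n * c ^ 2 := by
    have : ∀ i : Fin n, (x i - c) ^ 2 = (x i) ^ 2 - 2 * c * x i + c ^ 2 := fun i => by ring
    rw [Finset.sum_congr rfl fun i _ => this i, Finset.sum_add_distrib,
      Finset.sum_sub_distrib, ← Finset.mul_sum, Finset.sum_const, Finset.card_univ,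
      Fintype.card_fin, nsmul_eq_mul]
  have hdb : (d : ℝ) * b ≤ ε * p ^ 2 * n * b ^ 2 := by
    have h1 : (0 : ℝ) < ε * p ^ 2 * n * b := by positivity
    have h2 : (d : ℝ) ≤ ε * p ^ 2 * n * b := by
      have := mul_le_mul_of_nonneg_left hB (le_of_lt (show (0:ℝ) < ε * p^2 * n by positivity))
      calc (d : ℝ) = ε * p ^ 2 * n * ((n : ℝ) / (ε * d)) := by
            rw [hp_def]; field_simp
        _ ≤ ε * p ^ 2 * n * b := this
    calc (d : ℝ) * b ≤ (ε * p ^ 2 * n * b) * b := by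
          exact mul_le_mul_of_nonneg_right h2 (le_of_lt hb0)
      _ = ε * p ^ 2 * n * b ^ 2 := by ring
  have hvar : ∑ i : Fin n, (x i - c) ^ 2 ≤ 2 * ε * p ^ 2 * n * b ^ 2 := by
    rw [hvar_eq, hsum]
    have key1 : b * ((d : ℝ) + (b - 1) * K) - 2 * c * ((d : ℝ) * b) + n * c ^ 2
        ≤ 2 * ε * p ^ 2 * n * b ^ 2 := by
      rw [hK_def, hc_def]
      have hd_eq : (d : ℝ) = p * n := hpn.symm
      rw [hd_eq]
      have hKb : 0 ≤ (1 + ε) * p ^ 2 * n * b :=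
        mul_nonneg (mul_nonneg (mul_nonneg (by linarith) (sq_nonneg p)) hn0.le) hb0.le
      nlinarith [hdb, hp, hb0, hn0]
    have := hsumsq
    nlinarith [hsumsq]
  -- Cauchy-Schwarz
  have hcs : (∑ i ∈ A, (x i - c)) ^ 2 ≤ a * (2 * ε * p ^ 2 * n * b ^ 2) := by
    calc (∑ i ∈ A, (x i - c)) ^ 2 ≤ (A.card : ℝ) * ∑ i ∈ A, (x i - c) ^ 2 :=
          sq_sum_le_card_mul_sum_sq
      _ ≤ a * ∑ i : Fin n, (x i - c) ^ 2 := by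
          refine mul_le_mul_of_nonneg_left ?_ (le_of_lt ha0)
          exact Finset.sum_le_sum_of_subset_of_nonneg (Finset.subset_univ A)
            (fun i _ _ => sq_nonneg _)
      _ ≤ a * (2 * ε * p ^ 2 * n * b ^ 2) := mul_le_mul_of_nonneg_left hvar (le_of_lt ha0)
  have hApart : ∑ i ∈ A, (x i - c) = (ecount M A B : ℝ) - p * a * b := by
    rw [Finset.sum_sub_distrib, Finset.sum_const, nsmul_eq_mul, ← hsumA, hc_def]
    ring
  set e : ℝ := (ecount M A B : ℝ)
  set μ : ℝ := p * a * b with hμ_def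
  have hμ0 : 0 < μ := by positivity
  have hfinal : (e / μ - 1) ^ 2 ≤ 2 * ε * n / a := by
    have h1 : e / μ - 1 = (e - μ) / μ := by rw [sub_div, div_self (ne_of_gt hμ0)]
    rw [h1, div_pow, div_le_div_iff₀ (pow_pos hμ0 2) ha0]
    have h2 : (e - μ) ^ 2 ≤ a * (2 * ε * p ^ 2 * n * b ^ 2) := by
      rw [← hApart]; rw [hApart] at hcs; rw [← hμ_def] at *
      rw [hApart]
      exact hcs
    calc (e - μ) ^ 2 * a ≤ (a * (2 * ε * p ^ 2 * n * b ^ 2)) * a :=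
          mul_le_mul_of_nonneg_right h2 (le_of_lt ha0)
      _ = 2 * ε * n * μ ^ 2 := by rw [hμ_def]; ring
  calc |e / μ - 1| = Real.sqrt ((e / μ - 1) ^ 2) := (Real.sqrt_sq_eq_abs _).symm
    _ ≤ Real.sqrt (2 * ε * n / a) := Real.sqrt_le_sqrt hfinal

theorem stmt_18 (n d : ℕ) (hn : 1 ≤ n) (hd1 : 1 ≤ d) (hd2 : d ≤ n)
    (M : Fin n → Fin n → Bool) (hM : M ∈ regSet n d) (ε : ℝ) (hε : 0 < ε)
    (hco : ∀ i1 i2 : Fin n, i1 ≠ i2 →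
      max (codeg M i1 i2 : ℝ) (codeg (fun i j => M j i) i1 i2 : ℝ) ≤
        (1 + ε) * ((d : ℝ) / n) ^ 2 * n)
    (A B : Finset (Fin n))
    (hA : (n : ℝ) / (ε * d) ≤ (A.card : ℝ)) (hB : (n : ℝ) / (ε * d) ≤ (B.card : ℝ)) :
    |(ecount M A B : ℝ) / (((d : ℝ) / n) * A.card * B.card) - 1| ≤
      Real.sqrt (2 * ε * n / max (A.card : ℝ) (B.card : ℝ)) := by
  rw [regSet, Finset.mem_filter] at hM
  obtain ⟨-, hrow, hcol⟩ := hM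
  rcases le_total (B.card : ℝ) (A.card : ℝ) with h | h
  · rw [max_eq_left h]
    refine key n d hd1 hd2 M hcol ε hε ?_ A B hA hB
    intro j1 j2 hne
    have h2 := le_trans (le_max_right _ _) (hco j1 j2 hne)
    simpa [codeg] using h2
  · rw [max_eq_right h]
    have hkey := key n d hd1 hd2 (fun i j => M j i) (fun j => hrow j) ε hε
      (fun j1 j2 hne => by simpa [codeg] using le_trans (le_max_left _ _) (hco j1 j2 hne))
      B A hB hA
    rw [ecount_transpose] at hkey
    have heq : ((d : ℝ) / n) * (B.card : ℝ) * (A.card : ℝ)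
        = ((d : ℝ) / n) * (A.card : ℝ) * (B.card : ℝ) := by ring
    rw [heq] at hkey
    exact hkey
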